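/- In the cut-and-choose procedure for two agents, where agent 1's bipartition (X1, X2) of the goods is at least as equal (in her own utility) as agent 2's most equal bipartition (Y1, Y2) is in agent 2's utility, the resulting allocation A (agent 2 chooses her preferred bundle among X1, X2) satisfies SW(A) ≥ u1(X2) + u2(Y1) ≥ u1(X1) + u2(Y2), and hence SW(A) ≥ (u1(M) + u2(M))/2. -/
import Mathlib


open Finset

/-- In cut-and-choose, with agent 1's bipartition `(X1, X2)` at least as
equal (in `u1`) as agent 2's most equal bipartition `(Y1, Y2)` is (in `u2`), the
allocation in which agent 2 gets her weakly preferred bundle among `X1, X2` satisfies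
`SW(A) ≥ u1(X2) + u2(Y1) ≥ u1(X1) + u2(Y2)` and hence `SW(A) ≥ (u1(M) + u2(M)) / 2`. -/
theorem stmt_8 {G : Type*} [DecidableEq G] (M : Finset G) (u1 u2 : G → ℝ)
    (h1nn : ∀ g ∈ M, 0 ≤ u1 g) (h2nn : ∀ g ∈ M, 0 ≤ u2 g)
    (X1 X2 Y1 Y2 : Finset G)
    (hXdisj : Disjoint X1 X2) (hXunion : X1 ∪ X2 = M)
    (hYdisj : Disjoint Y1 Y2) (hYunion : Y1 ∪ Y2 = M)
    (hXord : ∑ g ∈ X2, u1 g ≤ ∑ g ∈ X1, u1 g)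
    (hYord : ∑ g ∈ Y2, u2 g ≤ ∑ g ∈ Y1, u2 g)
    (hYmin : ∀ B1 B2 : Finset G, Disjoint B1 B2 → B1 ∪ B2 = M →
      ∑ g ∈ Y1, u2 g - ∑ g ∈ Y2, u2 g ≤ |∑ g ∈ B1, u2 g - ∑ g ∈ B2, u2 g|)
    (hdiff : ∑ g ∈ X1, u1 g - ∑ g ∈ X2, u1 g ≤ ∑ g ∈ Y1, u2 g - ∑ g ∈ Y2, u2 g)
    (A1 A2 : Finset G)
    (hchoice : (A1 = X1 ∧ A2 = X2) ∨ (A1 = X2 ∧ A2 = X1))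
    (hpref : ∑ g ∈ A1, u2 g ≤ ∑ g ∈ A2, u2 g) :
    (∑ g ∈ X2, u1 g + ∑ g ∈ Y1, u2 g ≤ ∑ g ∈ A1, u1 g + ∑ g ∈ A2, u2 g) ∧
    (∑ g ∈ X1, u1 g + ∑ g ∈ Y2, u2 g ≤ ∑ g ∈ X2, u1 g + ∑ g ∈ Y1, u2 g) ∧
    ((∑ g ∈ M, u1 g + ∑ g ∈ M, u2 g) / 2 ≤ ∑ g ∈ A1, u1 g + ∑ g ∈ A2, u2 g) := by
  -- sums over M
  have hXsum : ∑ g ∈ X1, u1 g + ∑ g ∈ X2, u1 g = ∑ g ∈ M, u1 g := by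
    rw [← Finset.sum_union hXdisj, hXunion]
  have hYsum : ∑ g ∈ Y1, u2 g + ∑ g ∈ Y2, u2 g = ∑ g ∈ M, u2 g := by
    rw [← Finset.sum_union hYdisj, hYunion]
  have hAdisj : Disjoint A2 A1 := by
    rcases hchoice with ⟨h1, h2⟩ | ⟨h1, h2⟩ <;> subst h1 <;> subst h2
    · exact hXdisj.symm
    · exact hXdisj
  have hAunion : A2 ∪ A1 = M := by
    rcases hchoice with ⟨h1, h2⟩ | ⟨h1, h2⟩ <;> subst h1 <;> subst h2
    · rw [Finset.union_comm]; exact hXunion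
    · exact hXunion
  have hA2sum : ∑ g ∈ A2, u2 g + ∑ g ∈ A1, u2 g = ∑ g ∈ M, u2 g := by
    rw [← Finset.sum_union hAdisj, hAunion]
  have hmin := hYmin A2 A1 hAdisj hAunion
  rw [abs_of_nonneg (by linarith)] at hmin
  have hu2A2 : ∑ g ∈ Y1, u2 g ≤ ∑ g ∈ A2, u2 g := by linarith
  have hu1A1 : ∑ g ∈ X2, u1 g ≤ ∑ g ∈ A1, u1 g := by
    rcases hchoice with ⟨h1, _⟩ | ⟨h1, _⟩ <;> subst h1
    · exact hXord
    · exact le_refl _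
  refine ⟨by linarith, by linarith, by linarith [hXsum, hYsum]⟩
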